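/- Under the hypotheses L,K ∈ ℤⁿ with 0 < kᵢ < ℓᵢ, G = ℤ_{τ−κ} with τ=∏ℓᵢ, κ=∏kᵢ, and kᵢ units in G for i ≥ 2, the splitting sequence β₁=1, β_{i+1}=k_{i+1}⁻¹ℓᵢβᵢ satisfies (L−K)·β = Σᵢ (ℓᵢ−kᵢ)βᵢ = 0 in G. -/

import Mathlib

/-- Auxiliary general version over an arbitrary modulus `N`. -/
theorem chair_aux (n : ℕ) (hn : 0 < n) (ℓ k : Fin n → ℕ) (N : ℕ)
    (hlk : ∀ i, 0 < k i ∧ k i < ℓ i)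
    (hτκ : ((∏ i, ℓ i : ℕ) : ZMod N) = ((∏ i, k i : ℕ) : ZMod N))
    (hunit : ∀ i : Fin n, 0 < (i : ℕ) → IsUnit ((k i : ZMod N)))
    (β : Fin n → ZMod N)
    (hβ0 : β ⟨0, hn⟩ = 1)
    (hβ : ∀ i : ℕ, (h : i + 1 < n) →
      β ⟨i + 1, h⟩ =
        Ring.inverse ((k ⟨i + 1, h⟩ : ZMod N)) *
          (ℓ ⟨i, Nat.lt_of_succ_lt h⟩ : ZMod N) * β ⟨i, Nat.lt_of_succ_lt h⟩) :
    ∑ i, ((ℓ i - k i : ℕ) : ZMod N) * β i = 0 := by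
  set L' : ℕ → ℕ := fun j => if h : j < n then ℓ ⟨j, h⟩ else 1 with hL'
  set K' : ℕ → ℕ := fun j => if h : j < n then k ⟨j, h⟩ else 1 with hK'
  set β' : ℕ → ZMod N := fun j => if h : j < n then β ⟨j, h⟩ else 0 with hβ'
  have hLv : ∀ (j : ℕ) (h : j < n), L' j = ℓ ⟨j, h⟩ := fun j h => dif_pos h
  have hKv : ∀ (j : ℕ) (h : j < n), K' j = k ⟨j, h⟩ := fun j h => dif_pos h
  have hβv : ∀ (j : ℕ) (h : j < n), β' j = β ⟨j, h⟩ := fun j h => dif_pos h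
  -- key step: ℓᵢ βᵢ = k_{i+1} β_{i+1}
  have key : ∀ j : ℕ, j + 1 < n →
      (L' j : ZMod N) * β' j = (K' (j + 1) : ZMod N) * β' (j + 1) := by
    intro j h
    rw [hLv j (by omega), hKv (j+1) h, hβv j (by omega), hβv (j+1) h,
      hβ j h, ← mul_assoc, ← mul_assoc,
      Ring.mul_inverse_cancel _ (hunit ⟨j+1, h⟩ (by simp)), one_mul]
  -- induction: (∏_{j<i} k_{j+1}) β_i = ∏_{j<i} ℓ_j
  have claim : ∀ i : ℕ, (h : i < n) →
      (∏ j ∈ Finset.range i, (K' (j + 1) : ZMod N)) * β' i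
        = ∏ j ∈ Finset.range i, (L' j : ZMod N) := by
    intro i
    induction i with
    | zero => intro h; simpa [hβv 0 h] using hβ0
    | succ i ih =>
      intro h
      rw [Finset.prod_range_succ, Finset.prod_range_succ, mul_assoc,
        ← key i h, ← mul_assoc]
      rw [mul_comm (∏ j ∈ Finset.range i, (K' (j+1) : ZMod N)) ((L' i : ZMod N)),
        mul_assoc, ih (by omega), mul_comm]
  have hm : n - 1 + 1 = n := by omega
  set m := n - 1 with hmdef
  have hmn : m < n := by omega
  set u : ZMod N := ∏ j ∈ Finset.range m, (K' (j + 1) : ZMod N) with hu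
  have hu_unit : IsUnit u := by
    rw [hu]
    refine Finset.prod_induction _ IsUnit (fun a b => IsUnit.mul) isUnit_one ?_
    intro j hj
    have hjn : j + 1 < n := by
      have := Finset.mem_range.mp hj; omega
    rw [hKv (j+1) hjn]
    exact hunit ⟨j+1, hjn⟩ (by simp)
  -- rewrite the Fin-products as range-products
  have hLprod : ((∏ i, ℓ i : ℕ) : ZMod N) = ∏ j ∈ Finset.range n, (L' j : ZMod N) := by
    rw [Nat.cast_prod, ← Fin.prod_univ_eq_prod_range (fun j => (L' j : ZMod N)) n]
    exact Finset.prod_congr rfl fun i _ => by rw [hLv i i.isLt]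
  have hKprod : ((∏ i, k i : ℕ) : ZMod N) = ∏ j ∈ Finset.range n, (K' j : ZMod N) := by
    rw [Nat.cast_prod, ← Fin.prod_univ_eq_prod_range (fun j => (K' j : ZMod N)) n]
    exact Finset.prod_congr rfl fun i _ => by rw [hKv i i.isLt]
  -- main identity: ℓ_{n-1} β_{n-1} = k_0
  have hmain : (L' m : ZMod N) * β' m = (K' 0 : ZMod N) := by
    have h1 : u * ((L' m : ZMod N) * β' m) = ∏ j ∈ Finset.range n, (L' j : ZMod N) := by
      rw [← hm, Finset.prod_range_succ]
      rw [mul_comm ((L' m : ZMod N)) (β' m), ← mul_assoc, claim m hmn]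
    have h2 : u * (K' 0 : ZMod N) = ∏ j ∈ Finset.range n, (K' j : ZMod N) := by
      rw [← hm, Finset.prod_range_succ', hu]
    have h3 : u * ((L' m : ZMod N) * β' m) = u * (K' 0 : ZMod N) := by
      rw [h1, h2, ← hLprod, ← hKprod, hτκ]
    exact hu_unit.mul_left_cancel h3
  -- now the telescoping sum
  have hsum : (∑ i, ((ℓ i - k i : ℕ) : ZMod N) * β i)
      = ∑ j ∈ Finset.range n, (((L' j : ZMod N) - (K' j : ZMod N)) * β' j) := by
    rw [← Fin.sum_univ_eq_sum_range
      (fun j => ((L' j : ZMod N) - (K' j : ZMod N)) * β' j) n]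
    refine Finset.sum_congr rfl fun i _ => ?_
    rw [hLv i i.isLt, hKv i i.isLt, hβv i i.isLt, Fin.eta,
      Nat.cast_sub (hlk i).2.le]
  rw [hsum]
  have hsplit : ∑ j ∈ Finset.range n, (((L' j : ZMod N) - (K' j : ZMod N)) * β' j)
      = (∑ j ∈ Finset.range n, (L' j : ZMod N) * β' j)
        - ∑ j ∈ Finset.range n, (K' j : ZMod N) * β' j := by
    rw [← Finset.sum_sub_distrib]
    exact Finset.sum_congr rfl fun j _ => by ring
  rw [hsplit]
  have hL : ∑ j ∈ Finset.range n, (L' j : ZMod N) * β' j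
      = (∑ j ∈ Finset.range m, (L' j : ZMod N) * β' j) + (L' m : ZMod N) * β' m := by
    rw [← hm, Finset.sum_range_succ]
  have hK : ∑ j ∈ Finset.range n, (K' j : ZMod N) * β' j
      = (∑ j ∈ Finset.range m, (K' (j+1) : ZMod N) * β' (j+1)) + (K' 0 : ZMod N) * β' 0 := by
    rw [← hm, Finset.sum_range_succ']
  have hmid : ∑ j ∈ Finset.range m, (L' j : ZMod N) * β' j
      = ∑ j ∈ Finset.range m, (K' (j+1) : ZMod N) * β' (j+1) :=
    Finset.sum_congr rfl fun j hj => key j (by have := Finset.mem_range.mp hj; omega)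
  rw [hL, hK, hmid, hβv 0 hn, hβ0, mul_one, hmain]
  ring

/-- With `β₁ = 1` and `β_{i+1} = k_{i+1}⁻¹ ℓᵢ βᵢ` in `G = ℤ_{τ−κ}`, the splitting
sequence satisfies `(L−K)·β = Σᵢ (ℓᵢ−kᵢ)βᵢ = 0`. -/
theorem chair_LminusK_beta_zero (n : ℕ) (hn : 0 < n) (ℓ k : Fin n → ℕ)
    (hlk : ∀ i, 0 < k i ∧ k i < ℓ i)
    (hunit : ∀ i : Fin n, 0 < (i : ℕ) →
      IsUnit ((k i : ZMod ((∏ i, ℓ i) - ∏ i, k i))))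
    (β : Fin n → ZMod ((∏ i, ℓ i) - ∏ i, k i))
    (hβ0 : β ⟨0, hn⟩ = 1)
    (hβ : ∀ i : ℕ, (h : i + 1 < n) →
      β ⟨i + 1, h⟩ =
        Ring.inverse ((k ⟨i + 1, h⟩ : ZMod ((∏ i, ℓ i) - ∏ i, k i))) *
          (ℓ ⟨i, by omega⟩ : ZMod ((∏ i, ℓ i) - ∏ i, k i)) * β ⟨i, by omega⟩) :
    ∑ i, ((ℓ i - k i : ℕ) : ZMod ((∏ i, ℓ i) - ∏ i, k i)) * β i = 0 := by
  have hκτ : (∏ i, k i) ≤ ∏ i, ℓ i :=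
    Finset.prod_le_prod (fun i _ => Nat.zero_le _) (fun i _ => (hlk i).2.le)
  have hτκ : ((∏ i, ℓ i : ℕ) : ZMod ((∏ i, ℓ i) - ∏ i, k i))
      = ((∏ i, k i : ℕ) : ZMod ((∏ i, ℓ i) - ∏ i, k i)) := by
    have h0 := ZMod.natCast_self ((∏ i, ℓ i) - ∏ i, k i)
    rw [Nat.cast_sub hκτ, sub_eq_zero] at h0
    exact h0
  exact chair_aux n hn ℓ k _ hlk hτκ hunit β hβ0 hβ
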